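/- arXiv:1904.06791 — 5 statements merged into one kernel-verified Lean document; each statement's English description precedes it below -/
import Mathlib

section
/- For any κ > 0 and any 0 < α < p, the Lebesgue integral ∫_0^∞ (e^{-u^p} - e^{-u^p κ}) u^{-1-α} du equals α^{-1} Γ(1 - α/p)(κ^{α/p} - 1), where Γ denotes the Gamma function. -/
open MeasureTheory Real Set Filter

private lemma exp_abs_sub_le {a b : ℝ} (ha : 0 ≤ a) (hb : 0 ≤ b) :
    |Real.exp (-a) - Real.exp (-b)| ≤ |a - b| := by
  wlog h : a ≤ b generalizing a b
  · rw [abs_sub_comm, abs_sub_comm a b]; exact this hb ha (le_of_not_ge h)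
  have h1 : Real.exp (-b) ≤ Real.exp (-a) := Real.exp_le_exp.2 (by linarith)
  have h2 : a - b + 1 ≤ Real.exp (a - b) := Real.add_one_le_exp _
  have h3 : Real.exp (-a) ≤ 1 := Real.exp_le_one_iff.2 (by linarith)
  have h4 : Real.exp (-a) * Real.exp (a - b) = Real.exp (-b) := by
    rw [← Real.exp_add]; ring_nf
  have h5 : 0 < Real.exp (-a) := Real.exp_pos _
  rw [abs_of_nonneg (by linarith), abs_of_nonpos (by linarith)]
  nlinarith

private lemma intOn_exp_rpow {r s : ℝ} (hr : 0 < r) (hs : 0 < s) (hs1 : s < 1) :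
    IntegrableOn (fun t : ℝ => Real.exp (-(r * t)) * t ^ (-s)) (Set.Ioi 0) := by
  have h := integrableOn_rpow_mul_exp_neg_mul_rpow (p := 1) (s := -s) (b := r)
    (by linarith) one_pos hr
  refine h.congr_fun (fun t ht => ?_) measurableSet_Ioi
  beta_reduce; rw [Real.rpow_one, mul_comm, neg_mul]

private lemma key (κ s : ℝ) (hκ : 0 < κ) (hs : 0 < s) (hs1 : s < 1) :
    ∫ t in Set.Ioi (0:ℝ), (Real.exp (-t) - Real.exp (-(t * κ))) * t ^ (-1 - s)
      = Real.Gamma (1 - s) * (κ ^ s - 1) / s := by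
  set F : ℝ → ℝ := fun t => (Real.exp (-(κ * t)) - Real.exp (-t)) * t ^ (-s) / s with hF
  set F' : ℝ → ℝ := fun t =>
    ((Real.exp (-(κ * t)) * (-κ) - Real.exp (-t) * (-1)) * t ^ (-s)
      + (Real.exp (-(κ * t)) - Real.exp (-t)) * (-s * t ^ (-s - 1))) / s with hF'
  set g : ℝ → ℝ := fun t =>
    (κ * (Real.exp (-(κ * t)) * t ^ (-s)) - Real.exp (-t) * t ^ (-s)) / s with hg
  -- derivative
  have hderiv : ∀ t ∈ Set.Ioi (0:ℝ), HasDerivAt F (F' t) t := by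
    intro t ht
    have d1 : HasDerivAt (fun t : ℝ => Real.exp (-(κ * t))) (Real.exp (-(κ * t)) * (-κ)) t := by
      have : HasDerivAt (fun t : ℝ => -(κ * t)) (-κ) t := by
        simpa only [mul_one, neg_mul] using (hasDerivAt_id' t).const_mul (-κ)
      exact this.exp
    have d2 : HasDerivAt (fun t : ℝ => Real.exp (-t)) (Real.exp (-t) * (-1)) t := by
      have : HasDerivAt (fun t : ℝ => -t) (-1 : ℝ) t := (hasDerivAt_id t).neg
      exact this.exp
    have d3 : HasDerivAt (fun t : ℝ => t ^ (-s)) (-s * t ^ (-s - 1)) t :=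
      Real.hasDerivAt_rpow_const (Or.inl (ne_of_gt ht))
    exact ((d1.sub d2).mul d3).div_const s
  -- pointwise decomposition
  have hdecomp : ∀ t ∈ Set.Ioi (0:ℝ),
      (Real.exp (-t) - Real.exp (-(t * κ))) * t ^ (-1 - s) = F' t + g t := by
    intro t ht
    have ht' : (0:ℝ) < t := ht
    have h1 : t ^ (-s - 1) = t ^ (-s) / t := by
      rw [Real.rpow_sub ht', Real.rpow_one]
    have h2 : t ^ (-1 - s) = t ^ (-s) / t := by
      rw [show (-1 - s) = (-s - 1) by ring, h1]
    have h3 : t * κ = κ * t := mul_comm _ _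
    simp only [hF', hg]
    rw [h1, h2, h3]
    field_simp
    ring
  -- measurability
  have hmeas : AEStronglyMeasurable
      (fun t : ℝ => (Real.exp (-t) - Real.exp (-(t * κ))) * t ^ (-1 - s))
      (volume.restrict (Set.Ioi (0:ℝ))) := by
    refine ContinuousOn.aestronglyMeasurable (fun t ht => ?_) measurableSet_Ioi
    exact (((Real.continuous_exp.comp continuous_neg).sub
      (Real.continuous_exp.comp
        (continuous_id.mul continuous_const).neg)).continuousAt.continuousWithinAt).mul
      ((Real.continuousAt_rpow_const t _ (Or.inl (ne_of_gt ht))).continuousWithinAt)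
  have hbound_aux : ∀ t : ℝ, 0 < t →
      |(Real.exp (-t) - Real.exp (-(t * κ))) * t ^ (-1 - s)|
        ≤ (|1 - κ| * t) * t ^ (-1 - s) := by
    intro t ht
    rw [abs_mul, abs_of_nonneg (Real.rpow_nonneg ht.le _)]
    apply mul_le_mul_of_nonneg_right _ (Real.rpow_nonneg ht.le _)
    calc |Real.exp (-t) - Real.exp (-(t * κ))| ≤ |t - t * κ| :=
          exp_abs_sub_le ht.le (by positivity)
      _ = |1 - κ| * t := by
          rw [show t - t * κ = (1 - κ) * t by ring, abs_mul, abs_of_nonneg ht.le]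
  -- integrability of the integrand
  have hfi : IntegrableOn
      (fun t : ℝ => (Real.exp (-t) - Real.exp (-(t * κ))) * t ^ (-1 - s))
      (Set.Ioi (0:ℝ)) := by
    rw [← Set.Ioc_union_Ioi_eq_Ioi (zero_le_one)]
    apply IntegrableOn.union
    · have hi : IntegrableOn (fun t : ℝ => |1 - κ| * t ^ (-s)) (Set.Ioc (0:ℝ) 1) := by
        have := (intervalIntegral.intervalIntegrable_rpow' (a := 0) (b := 1)
          (r := -s) (by linarith)).const_mul |1 - κ|
        rwa [intervalIntegrable_iff_integrableOn_Ioc_of_le zero_le_one] at this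
      refine Integrable.mono' hi (hmeas.mono_measure
        (Measure.restrict_mono Set.Ioc_subset_Ioi_self le_rfl)) ?_
      filter_upwards [ae_restrict_mem measurableSet_Ioc] with t ht
      have ht' : 0 < t := ht.1
      calc ‖(Real.exp (-t) - Real.exp (-(t * κ))) * t ^ (-1 - s)‖
          ≤ (|1 - κ| * t) * t ^ (-1 - s) := hbound_aux t ht'
        _ = |1 - κ| * t ^ (-s) := by
            rw [mul_assoc]; congr 1
            rw [show (-s) = 1 + (-1 - s) by ring, Real.rpow_add ht', Real.rpow_one]
    · have hi : IntegrableOn (fun t : ℝ => Real.exp (-1 * t) + Real.exp (-κ * t))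
          (Set.Ioi (1:ℝ)) :=
        (exp_neg_integrableOn_Ioi 1 one_pos).add (exp_neg_integrableOn_Ioi 1 hκ)
      refine Integrable.mono' hi (hmeas.mono_measure
        (Measure.restrict_mono (Set.Ioi_subset_Ioi zero_le_one) le_rfl)) ?_
      filter_upwards [ae_restrict_mem measurableSet_Ioi] with t ht
      have ht1 : (1:ℝ) ≤ t := le_of_lt ht
      have ht' : (0:ℝ) < t := lt_of_lt_of_le one_pos ht1
      have hle : t ^ (-1 - s) ≤ 1 :=
        Real.rpow_le_one_of_one_le_of_nonpos ht1 (by linarith)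
      calc ‖(Real.exp (-t) - Real.exp (-(t * κ))) * t ^ (-1 - s)‖
          = |Real.exp (-t) - Real.exp (-(t * κ))| * t ^ (-1 - s) := by
            rw [norm_mul, Real.norm_eq_abs, Real.norm_eq_abs,
              abs_of_nonneg (Real.rpow_nonneg ht'.le _)]
        _ ≤ (Real.exp (-t) + Real.exp (-(t * κ))) * 1 := by
            apply mul_le_mul _ hle (Real.rpow_nonneg ht'.le _) (by positivity)
            exact (abs_sub _ _).trans (by
              rw [abs_of_nonneg (Real.exp_pos _).le, abs_of_nonneg (Real.exp_pos _).le])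
        _ = Real.exp (-1 * t) + Real.exp (-κ * t) := by
            rw [mul_one, neg_one_mul, show -(t * κ) = -κ * t by ring]
  -- integrability of g
  have hκint : IntegrableOn (fun t : ℝ => Real.exp (-(κ * t)) * t ^ (-s))
      (Set.Ioi (0:ℝ)) := intOn_exp_rpow hκ hs hs1
  have h1int : IntegrableOn (fun t : ℝ => Real.exp (-t) * t ^ (-s))
      (Set.Ioi (0:ℝ)) := by
    have := intOn_exp_rpow one_pos hs hs1
    simpa only [one_mul] using this
  have hgint : IntegrableOn g (Set.Ioi (0:ℝ)) :=
    ((hκint.const_mul κ).sub h1int).div_const s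
  -- integrability of F'
  have hF'int : IntegrableOn F' (Set.Ioi (0:ℝ)) := by
    refine IntegrableOn.congr_fun (hfi.sub hgint) (fun t ht => ?_) measurableSet_Ioi
    have h := hdecomp t ht
    simp only [Pi.sub_apply]
    linarith
  -- continuity of F at 0 within Ici 0
  have hF0 : F 0 = 0 := by simp [hF]
  have hcont : ContinuousWithinAt F (Set.Ici (0:ℝ)) 0 := by
    rw [ContinuousWithinAt, hF0]
    refine squeeze_zero_norm' (a := fun t : ℝ => |1 - κ| * t ^ (1 - s) / s) ?_ ?_
    · filter_upwards [self_mem_nhdsWithin] with t (ht : (0:ℝ) ≤ t)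
      rcases eq_or_lt_of_le ht with h | h
      · simp [hF, ← h, Real.zero_rpow (show -s ≠ 0 by linarith),
          Real.zero_rpow (show 1 - s ≠ 0 by linarith)]
      · have h1 : |Real.exp (-(κ * t)) - Real.exp (-t)| ≤ |1 - κ| * t := by
          calc |Real.exp (-(κ * t)) - Real.exp (-t)| ≤ |κ * t - t| :=
                exp_abs_sub_le (by positivity) h.le
            _ = |1 - κ| * t := by
                rw [show κ * t - t = -((1 - κ) * t) by ring, abs_neg, abs_mul,
                  abs_of_nonneg h.le]
        have h2 : t * t ^ (-s) = t ^ (1 - s) := by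
          rw [show (1 - s) = 1 + (-s) by ring, Real.rpow_add h, Real.rpow_one]
        simp only [hF]
        rw [norm_div, norm_mul, Real.norm_eq_abs, Real.norm_eq_abs,
          abs_of_nonneg (Real.rpow_nonneg h.le _), Real.norm_eq_abs,
          abs_of_nonneg hs.le]
        refine (div_le_div_iff_of_pos_right hs).2 ?_
        calc |Real.exp (-(κ * t)) - Real.exp (-t)| * t ^ (-s)
            ≤ (|1 - κ| * t) * t ^ (-s) :=
              mul_le_mul_of_nonneg_right h1 (Real.rpow_nonneg h.le _)
          _ = |1 - κ| * t ^ (1 - s) := by rw [mul_assoc, h2]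
    · have h0 : Filter.Tendsto (fun t : ℝ => t ^ (1 - s)) (nhdsWithin 0 (Set.Ici 0))
          (nhds ((0:ℝ) ^ (1 - s))) :=
        ((Real.continuousAt_rpow_const 0 (1 - s)
          (Or.inr (by linarith))).continuousWithinAt).tendsto
      rw [Real.zero_rpow (show 1 - s ≠ 0 by linarith)] at h0
      simpa using (h0.const_mul (|1 - κ|)).div_const s
  -- limit of F at infinity
  have htop : Filter.Tendsto F Filter.atTop (nhds 0) := by
    have l1 : Filter.Tendsto (fun t : ℝ => Real.exp (-(κ * t))) Filter.atTop (nhds 0) := by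
      have h := Real.tendsto_exp_atBot.comp
        (Filter.tendsto_neg_atTop_atBot.comp
          ((Filter.tendsto_id (α := ℝ)).const_mul_atTop hκ))
      exact h.congr fun t => rfl
    have l2 : Filter.Tendsto (fun t : ℝ => Real.exp (-t)) Filter.atTop (nhds 0) := by
      have h := Real.tendsto_exp_atBot.comp (Filter.tendsto_neg_atTop_atBot (G := ℝ))
      exact h.congr fun t => rfl
    have l3 := tendsto_rpow_neg_atTop hs
    simpa using ((l1.sub l2).mul l3).div_const s
  have hFTC : ∫ t in Set.Ioi (0:ℝ), F' t = 0 - F 0 :=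
    integral_Ioi_of_hasDerivAt_of_tendsto hcont hderiv hF'int htop
  -- the Gamma integrals
  have vκ : ∫ t in Set.Ioi (0:ℝ), Real.exp (-(κ * t)) * t ^ (-s)
      = (1 / κ) ^ (1 - s) * Real.Gamma (1 - s) := by
    rw [← Real.integral_rpow_mul_exp_neg_mul_Ioi (by linarith : (0:ℝ) < 1 - s) hκ]
    refine setIntegral_congr_fun measurableSet_Ioi (fun t ht => ?_)
    rw [mul_comm, show (1 - s - 1) = -s by ring]
  have v1 : ∫ t in Set.Ioi (0:ℝ), Real.exp (-t) * t ^ (-s) = Real.Gamma (1 - s) := by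
    have h := Real.integral_rpow_mul_exp_neg_mul_Ioi (a := 1 - s) (r := 1)
      (by linarith : (0:ℝ) < 1 - s) one_pos
    simp only [one_mul, one_div, inv_one, Real.one_rpow] at h
    rw [← h]
    refine setIntegral_congr_fun measurableSet_Ioi (fun t ht => ?_)
    rw [mul_comm, show (1 - s - 1) = -s by ring]
  -- put it together
  rw [setIntegral_congr_fun measurableSet_Ioi hdecomp,
    integral_add hF'int hgint, hFTC, hF0]
  have hgval : ∫ t in Set.Ioi (0:ℝ), g t
      = (κ * ((1 / κ) ^ (1 - s) * Real.Gamma (1 - s)) - Real.Gamma (1 - s)) / s := by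
    simp only [hg]
    rw [integral_div, integral_sub (hκint.const_mul κ) h1int, integral_const_mul, vκ, v1]
  rw [hgval]
  have hpow : κ * ((1 / κ) ^ (1 - s) * Real.Gamma (1 - s))
      = κ ^ s * Real.Gamma (1 - s) := by
    rw [← mul_assoc]
    congr 1
    rw [one_div, ← Real.rpow_neg_one κ, ← Real.rpow_mul hκ.le]
    nth_rewrite 1 [← Real.rpow_one κ]
    rw [← Real.rpow_add hκ]
    congr 1; ring
  rw [hpow]
  ring

/-- Lemma 3: for `κ > 0` and `0 < α < p`,
`∫_0^∞ (e^{-u^p} - e^{-u^p κ}) u^{-1-α} du = α⁻¹ Γ(1-α/p)(κ^{α/p} - 1)`. -/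
theorem stmt_1 (κ α p : ℝ) (hκ : 0 < κ) (hα : 0 < α) (hαp : α < p) :
    ∫ u in Set.Ioi (0 : ℝ),
        (Real.exp (-(u ^ p)) - Real.exp (-(u ^ p * κ))) * u ^ (-1 - α)
      = α⁻¹ * Real.Gamma (1 - α / p) * (κ ^ (α / p) - 1) := by
  have hp : 0 < p := lt_trans hα hαp
  set s : ℝ := α / p with hsdef
  have hs : 0 < s := div_pos hα hp
  have hs1 : s < 1 := (div_lt_one hp).2 hαp
  have hsub := MeasureTheory.integral_comp_rpow_Ioi_of_pos
    (g := fun t : ℝ => (1 / p) * ((Real.exp (-t) - Real.exp (-(t * κ))) * t ^ (-1 - s))) hp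
  have hcongr : ∀ u ∈ Set.Ioi (0:ℝ),
      (Real.exp (-(u ^ p)) - Real.exp (-(u ^ p * κ))) * u ^ (-1 - α)
        = (p * u ^ (p - 1)) •
          ((1 / p) * ((Real.exp (-(u ^ p)) - Real.exp (-(u ^ p * κ)))
            * (u ^ p) ^ (-1 - s))) := by
    intro u hu
    have hu' : (0:ℝ) < u := hu
    have h1 : (u ^ p) ^ (-1 - s) = u ^ (p * (-1 - s)) := by
      rw [← Real.rpow_mul hu'.le]
    have h2 : u ^ (p - 1) * u ^ (p * (-1 - s)) = u ^ (-1 - α) := by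
      rw [← Real.rpow_add hu']
      congr 1
      rw [hsdef]
      field_simp
      ring
    rw [h1, smul_eq_mul]
    rw [show (p * u ^ (p - 1)) * ((1 / p) * ((Real.exp (-(u ^ p)) - Real.exp (-(u ^ p * κ)))
        * u ^ (p * (-1 - s)))) = (p * (1 / p)) * ((Real.exp (-(u ^ p))
        - Real.exp (-(u ^ p * κ))) * (u ^ (p - 1) * u ^ (p * (-1 - s)))) by ring, h2]
    rw [mul_one_div_cancel hp.ne', one_mul]
  rw [setIntegral_congr_fun measurableSet_Ioi hcongr]
  rw [hsub, integral_const_mul, key κ s hκ hs hs1]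
  rw [hsdef]
  field_simp
end

section
/- Let d ≥ 1, let σ be a finite Borel measure on 𝕊^{d-1}, let (Q_ξ)_{ξ∈𝕊^{d-1}} be a Markov kernel from 𝕊^{d-1} to (0,∞), fix 0 < α < p, and define the tempering function q(ξ,u) = ∫_{(0,∞)} e^{-s u^p} Q_ξ(ds) for ξ ∈ 𝕊^{d-1}, u > 0. Define the Borel measures Q(B) = ∫_{𝕊^{d-1}} ∫_{(0,∞)} 1_B(sξ) Q_ξ(ds) σ(dξ) and R(B) = ∫_{ℝ^d} 1_B(x/|x|^{1+1/p}) |x|^{α/p} Q(dx), and for λ, t > 0 set K = ∫_{𝕊^{d-1}} ∫_0^∞ (q(ξ,u) - q(ξ, u e^{λt})) u^{-1-α} du σ(dξ). If R(ℝ^d) < ∞, then K = R(ℝ^d) · α^{-1} Γ(1 - α/p)(e^{λtα} - 1) < ∞. -/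
open MeasureTheory ProbabilityTheory
open scoped ENNReal
open Set

lemma myGammaInt {α p c : ℝ} (hα : 0 < α) (hαp : α < p) (hc : 0 < c) :
    IntegrableOn (fun u : ℝ => u ^ (p - 1 - α) * Real.exp (-c * u ^ p)) (Ioi 0) := by
  have hp : 0 < p := hα.trans hαp
  have hexp : (-1 : ℝ) < -(α / p) := by
    have : α / p < 1 := (div_lt_one hp).mpr hαp
    linarith
  have base : IntegrableOn (fun x : ℝ => x ^ (-(α / p)) * Real.exp (-c * x)) (Ioi 0) := by
    have h := integrableOn_rpow_mul_exp_neg_mul_rpow hexp zero_lt_one hc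
    simpa [Real.rpow_one] using h
  have h2 := (integrableOn_Ioi_comp_rpow_iff
      (fun x : ℝ => x ^ (-(α / p)) * Real.exp (-c * x)) hp.ne').mpr base
  have h3 := h2.const_mul (|p|)⁻¹
  refine IntegrableOn.congr_fun h3 ?_ measurableSet_Ioi
  intro x hx
  have hx0 : (0 : ℝ) < x := hx
  have habs : |p| = p := abs_of_pos hp
  have h4 : (x ^ p) ^ (-(α / p)) = x ^ (-α) := by
    rw [← Real.rpow_mul hx0.le]
    congr 1
    field_simp
  have h5 : x ^ (p - 1) * x ^ (-α) = x ^ (p - 1 - α) := by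
    rw [← Real.rpow_add hx0]; ring_nf
  simp only [smul_eq_mul, habs, h4]
  field_simp
  rw [← h5]

lemma myLcore {α p a b : ℝ} (hα : 0 < α) (hαp : α < p) (ha : 0 < a) (hab : a < b) :
    ∫⁻ u in Set.Ioi (0 : ℝ), ENNReal.ofReal
        ((Real.exp (-(a * u ^ p)) - Real.exp (-(b * u ^ p))) * u ^ (-1 - α)) =
      ENNReal.ofReal ((b ^ (α / p) - a ^ (α / p)) * Real.Gamma (1 - α / p) / α) := by
  have hp : 0 < p := hα.trans hαp
  have hαp1 : α / p < 1 := (div_lt_one hp).mpr hαp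
  have hG : 0 < Real.Gamma (1 - α / p) := Real.Gamma_pos_of_pos (by linarith)
  -- step 1: pointwise identity turning the difference into a lintegral over c in Ioc a b
  have key : ∀ u ∈ Set.Ioi (0 : ℝ), ENNReal.ofReal
      ((Real.exp (-(a * u ^ p)) - Real.exp (-(b * u ^ p))) * u ^ (-1 - α)) =
      ∫⁻ c in Set.Ioc a b,
        ENNReal.ofReal (u ^ p * Real.exp (-(c * u ^ p)) * u ^ (-1 - α)) := by
    intro u hu
    have hu0 : (0 : ℝ) < u := hu
    have hup : 0 < u ^ p := Real.rpow_pos_of_pos hu0 p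
    have hder : ∀ c ∈ Set.uIcc a b, HasDerivAt (fun c : ℝ => -Real.exp (-(c * u ^ p)))
        (u ^ p * Real.exp (-(c * u ^ p))) c := by
      intro c _
      have h1 : HasDerivAt (fun c : ℝ => -(c * u ^ p)) (-(u ^ p)) c := by
        exact (((hasDerivAt_id' c).mul_const (u ^ p)).neg).congr_deriv (by ring)
      have h2 := (Real.hasDerivAt_exp (-(c * u ^ p))).comp c h1
      exact h2.neg.congr_deriv (by ring)
    have hcont : IntervalIntegrable (fun c : ℝ => u ^ p * Real.exp (-(c * u ^ p))) volume a b :=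
      (Continuous.intervalIntegrable (by continuity) a b)
    have hFTC : ∫ c in a..b, u ^ p * Real.exp (-(c * u ^ p)) =
        Real.exp (-(a * u ^ p)) - Real.exp (-(b * u ^ p))  := by
      rw [intervalIntegral.integral_eq_sub_of_hasDerivAt hder hcont]
      ring_nf
    have hIoc : ∫ c in Set.Ioc a b, (u ^ p * Real.exp (-(c * u ^ p))) * u ^ (-1 - α) =
        (Real.exp (-(a * u ^ p)) - Real.exp (-(b * u ^ p))) * u ^ (-1 - α) := by
      rw [MeasureTheory.integral_mul_const, ← intervalIntegral.integral_of_le hab.le, hFTC]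
    rw [← hIoc]
    rw [MeasureTheory.ofReal_integral_eq_lintegral_ofReal]
    · exact (Continuous.integrableOn_Ioc (by continuity)).integrable.mul_const _
    · refine Filter.Eventually.of_forall fun c => ?_
      positivity
  rw [MeasureTheory.setLIntegral_congr_fun measurableSet_Ioi
    key]
  -- step 2: swap the two integrals
  have hmeas : Measurable (fun z : ℝ × ℝ =>
      ENNReal.ofReal (z.1 ^ p * Real.exp (-(z.2 * z.1 ^ p)) * z.1 ^ (-1 - α))) := by
    have m1 : Measurable fun z : ℝ × ℝ => z.1 ^ p := by fun_prop
    have m2 : Measurable fun z : ℝ × ℝ => z.1 ^ (-1 - α) := by fun_prop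
    exact ((m1.mul ((measurable_snd.mul m1).neg.exp)).mul m2).ennreal_ofReal
  rw [MeasureTheory.lintegral_lintegral_swap hmeas.aemeasurable]
  -- step 3: evaluate the inner integral via the Gamma integral
  have inner : ∀ c ∈ Set.Ioc a b,
      ∫⁻ u in Set.Ioi (0 : ℝ), ENNReal.ofReal (u ^ p * Real.exp (-(c * u ^ p)) * u ^ (-1 - α)) =
      ENNReal.ofReal (c ^ (α / p - 1) * ((1 / p) * Real.Gamma (1 - α / p))) := by
    intro c hc
    have hc0 : 0 < c := ha.trans hc.1
    have step : ∀ u ∈ Set.Ioi (0 : ℝ),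
        ENNReal.ofReal (u ^ p * Real.exp (-(c * u ^ p)) * u ^ (-1 - α)) =
        ENNReal.ofReal (u ^ (p - 1 - α) * Real.exp (-c * u ^ p)) := by
      intro u hu
      have hu0 : (0 : ℝ) < u := hu
      congr 1
      rw [show p - 1 - α = p + (-1 - α) by ring, Real.rpow_add hu0]
      ring_nf
    rw [MeasureTheory.setLIntegral_congr_fun measurableSet_Ioi
      step]
    rw [← MeasureTheory.ofReal_integral_eq_lintegral_ofReal (myGammaInt hα hαp hc0)
      (Filter.eventually_of_mem (ae_restrict_mem measurableSet_Ioi) (fun u hu => by have hu0 : (0:ℝ) < u := hu; positivity))]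
    rw [integral_rpow_mul_exp_neg_mul_rpow hp (by linarith) hc0]
    have e1 : -(p - 1 - α + 1) / p = α / p - 1 := by
      rw [show p - 1 - α + 1 = p - α by ring, neg_div, sub_div, div_self hp.ne', neg_sub]
    have e2 : (p - 1 - α + 1) / p = 1 - α / p := by
      rw [show p - 1 - α + 1 = p - α by ring, sub_div, div_self hp.ne']
    rw [e1, e2]
    congr 1
    ring
  rw [MeasureTheory.setLIntegral_congr_fun measurableSet_Ioc
    inner]
  -- step 4: compute the remaining integral over c
  have hInt : IntegrableOn (fun c : ℝ => c ^ (α / p - 1) * ((1 / p) * Real.Gamma (1 - α / p)))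
      (Set.Ioc a b) := by
    refine (IntegrableOn.mono_set ?_ Set.Ioc_subset_Icc_self)
    refine ContinuousOn.integrableOn_compact isCompact_Icc ?_
    refine (ContinuousOn.rpow_const continuousOn_id fun x hx => Or.inl ?_).mul continuousOn_const
    exact ne_of_gt (lt_of_lt_of_le ha hx.1)
  rw [← MeasureTheory.ofReal_integral_eq_lintegral_ofReal hInt
    (Filter.eventually_of_mem (ae_restrict_mem measurableSet_Ioc)
      (fun c hc => by have hc0 : 0 < c := ha.trans hc.1; positivity))]
  rw [MeasureTheory.integral_mul_const, ← intervalIntegral.integral_of_le hab.le,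
    integral_rpow (Or.inl (by have := div_pos hα hp; linarith))]
  congr 1
  have hα' : α ≠ 0 := hα.ne'
  have hp' : p ≠ 0 := hp.ne'
  rw [show α / p - 1 + 1 = α / p by ring]
  field_simp

lemma myIntExp {w : ℝ} (hw : 0 ≤ w) (μ : Measure ℝ) [IsFiniteMeasure μ] :
    Integrable (fun s => Real.exp (-(s * w))) (μ.restrict (Set.Ioi 0)) := by
  refine Integrable.mono' (integrable_const 1) ?_ ?_
  · exact (Real.continuous_exp.comp (continuous_id.mul continuous_const).neg).aestronglyMeasurable
  · filter_upwards [ae_restrict_mem measurableSet_Ioi] with s hs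
    have hs0 : (0 : ℝ) < s := hs
    rw [Real.norm_eq_abs, abs_of_pos (Real.exp_pos _)]
    rw [Real.exp_le_one_iff]
    nlinarith


/-- Proposition 2, part 2: if `0 < α < p` and the Rosiński measure `R` is finite, then
`K = R(ℝ^d) α⁻¹ Γ(1-α/p)(e^{λtα} - 1) < ∞`. -/
theorem stmt_4 (d : ℕ) (hd : 1 ≤ d)
    (σ : Measure (Metric.sphere (0 : EuclideanSpace ℝ (Fin d)) 1)) [IsFiniteMeasure σ]
    (Q : Kernel (Metric.sphere (0 : EuclideanSpace ℝ (Fin d)) 1) ℝ) [IsMarkovKernel Q]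
    (hQsupp : ∀ ξ, Q ξ (Set.Iic 0) = 0)
    (α p : ℝ) (hα0 : 0 < α) (hα2 : α < 2) (hαp : α < p)
    (q : Metric.sphere (0 : EuclideanSpace ℝ (Fin d)) 1 → ℝ → ℝ)
    (hq : ∀ ξ u, q ξ u = ∫ s in Set.Ioi (0 : ℝ), Real.exp (-(s * u ^ p)) ∂(Q ξ))
    (Qm Rm : Measure (EuclideanSpace ℝ (Fin d)))
    (hQm : Qm = σ.bind (fun ξ => (Q ξ).map (fun s : ℝ => s • (ξ : EuclideanSpace ℝ (Fin d)))))
    (hRm : Rm = (Qm.withDensity (fun x => ENNReal.ofReal (‖x‖ ^ (α / p)))).map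
        (fun x => ‖x‖ ^ (-(1 + 1 / p)) • x))
    (lam t : ℝ) (hlam : 0 < lam) (ht : 0 < t)
    (K : ℝ≥0∞)
    (hK : K = ∫⁻ ξ, (∫⁻ u in Set.Ioi (0 : ℝ),
        ENNReal.ofReal ((q ξ u - q ξ (u * Real.exp (lam * t))) * u ^ (-1 - α))) ∂σ)
    (hRfin : Rm Set.univ < ⊤) :
    K = Rm Set.univ *
        ENNReal.ofReal (α⁻¹ * Real.Gamma (1 - α / p) * (Real.exp (lam * t * α) - 1)) ∧
      K < ⊤ := by
  have hp : 0 < p := hα0.trans hαp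
  have hlt : 0 < lam * t := mul_pos hlam ht
  set c : ℝ := Real.exp (lam * t) with hc
  have hc1 : 1 < c := by
    rw [hc, ← Real.exp_zero]
    exact Real.exp_lt_exp.mpr hlt
  set E : ℝ := c ^ p with hEdef
  have hE1 : 1 < E := by
    rw [hEdef, hc, ← Real.exp_mul, ← Real.exp_zero]
    exact Real.exp_lt_exp.mpr (mul_pos hlt hp)
  have hE0 : 0 < E := lt_trans one_pos hE1
  set CC : ℝ := α⁻¹ * Real.Gamma (1 - α / p) * (Real.exp (lam * t * α) - 1) with hCC
  set I : Metric.sphere (0 : EuclideanSpace ℝ (Fin d)) 1 → ℝ≥0∞ :=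
    fun ξ => ∫⁻ s in Set.Ioi (0 : ℝ), ENNReal.ofReal (s ^ (α / p)) ∂(Q ξ) with hI
  -- Step A: compute the inner u-integral for each ξ
  have stepA : ∀ ξ, (∫⁻ u in Set.Ioi (0 : ℝ),
      ENNReal.ofReal ((q ξ u - q ξ (u * c)) * u ^ (-1 - α))) = I ξ * ENNReal.ofReal CC := by
    intro ξ
    have step1 : ∀ u ∈ Set.Ioi (0 : ℝ),
        ENNReal.ofReal ((q ξ u - q ξ (u * c)) * u ^ (-1 - α)) =
        ∫⁻ s in Set.Ioi (0 : ℝ), ENNReal.ofReal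
          ((Real.exp (-(s * u ^ p)) - Real.exp (-(s * E * u ^ p))) * u ^ (-1 - α)) ∂(Q ξ) := by
      intro u hu
      have hu0 : (0 : ℝ) < u := hu
      have hup : 0 < u ^ p := Real.rpow_pos_of_pos hu0 p
      have hint1 : Integrable (fun s => Real.exp (-(s * u ^ p)))
          ((Q ξ).restrict (Set.Ioi 0)) := myIntExp hup.le _
      have hint2 : Integrable (fun s => Real.exp (-(s * E * u ^ p)))
          ((Q ξ).restrict (Set.Ioi 0)) := by
        have h := myIntExp (w := E * u ^ p) (by positivity) (Q ξ)
        simpa [mul_assoc] using h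
      have hrw : ∀ s : ℝ, Real.exp (-(s * (u * c) ^ p)) = Real.exp (-(s * E * u ^ p)) := by
        intro s
        rw [Real.mul_rpow hu0.le (Real.exp_pos _).le]
        ring_nf
        simp only [hEdef, hc]
      have hqq : q ξ u - q ξ (u * c) = ∫ s in Set.Ioi (0 : ℝ),
          (Real.exp (-(s * u ^ p)) - Real.exp (-(s * E * u ^ p))) ∂(Q ξ) := by
        rw [hq, hq]
        simp_rw [hrw]
        exact (integral_sub hint1 hint2).symm
      have hintsub : Integrable (fun s => (Real.exp (-(s * u ^ p)) -
          Real.exp (-(s * E * u ^ p))) * u ^ (-1 - α)) ((Q ξ).restrict (Set.Ioi 0)) :=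
        (hint1.sub hint2).mul_const _
      rw [hqq, ← MeasureTheory.integral_mul_const,
        MeasureTheory.ofReal_integral_eq_lintegral_ofReal hintsub]
      filter_upwards [ae_restrict_mem measurableSet_Ioi] with s hs
      have hs0 : (0 : ℝ) < s := hs
      refine mul_nonneg (sub_nonneg.mpr (Real.exp_le_exp.mpr ?_)) (Real.rpow_nonneg hu0.le _)
      nlinarith [mul_pos (mul_pos hs0 hup) (sub_pos.mpr hE1)]
    rw [MeasureTheory.setLIntegral_congr_fun measurableSet_Ioi
      step1]
    rw [MeasureTheory.lintegral_lintegral_swap (by fun_prop)]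
    have step2 : ∀ s ∈ Set.Ioi (0 : ℝ),
        (∫⁻ u in Set.Ioi (0 : ℝ), ENNReal.ofReal
          ((Real.exp (-(s * u ^ p)) - Real.exp (-(s * E * u ^ p))) * u ^ (-1 - α))) =
        ENNReal.ofReal (s ^ (α / p)) * ENNReal.ofReal CC := by
      intro s hs
      have hs0 : (0 : ℝ) < s := hs
      have hb : s < s * E := by nlinarith
      rw [myLcore hα0 hαp hs0 hb, ← ENNReal.ofReal_mul (Real.rpow_nonneg hs0.le _)]
      congr 1
      have hEs : (s * E) ^ (α / p) = s ^ (α / p) * Real.exp (lam * t * α) := by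
        rw [Real.mul_rpow hs0.le hE0.le]
        congr 1
        rw [hEdef, ← Real.rpow_mul (lt_trans one_pos hc1).le,
          mul_comm p (α / p), div_mul_cancel₀ α hp.ne', hc, ← Real.exp_mul]
      rw [hEs, hCC]
      field_simp
    rw [MeasureTheory.setLIntegral_congr_fun measurableSet_Ioi
      step2]
    rw [MeasureTheory.lintegral_mul_const _ (by fun_prop)]
  have hImeas : Measurable I := by
    rw [hI]
    refine Measurable.setLIntegral_kernel_prod_right (κ := Q)
      (f := fun _ s => ENNReal.ofReal (s ^ (α / p))) ?_ measurableSet_Ioi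
    fun_prop
  have hKeq : K = (∫⁻ ξ, I ξ ∂σ) * ENNReal.ofReal CC := by
    rw [hK]
    simp_rw [stepA]
    exact MeasureTheory.lintegral_mul_const _ hImeas
  -- compute Rm univ
  have hmapm : Measurable (fun x : EuclideanSpace ℝ (Fin d) => ‖x‖ ^ (-(1 + 1 / p)) • x) := by
    fun_prop
  have hbindm : Measurable (fun ξ : Metric.sphere (0 : EuclideanSpace ℝ (Fin d)) 1 =>
      (Q ξ).map (fun s : ℝ => s • (ξ : EuclideanSpace ℝ (Fin d)))) := by
    rw [Measure.measurable_measure]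
    intro A hA
    have heq : ∀ ξ : Metric.sphere (0 : EuclideanSpace ℝ (Fin d)) 1,
        ((Q ξ).map (fun r : ℝ => r • (ξ : EuclideanSpace ℝ (Fin d)))) A =
        ∫⁻ r, A.indicator (fun _ => (1 : ℝ≥0∞)) (r • (ξ : EuclideanSpace ℝ (Fin d))) ∂(Q ξ) := by
      intro ξ
      rw [Measure.map_apply (by fun_prop) hA]
      rw [← MeasureTheory.lintegral_indicator_one
        (hA.preimage (by fun_prop : Measurable fun r : ℝ => r • (ξ : EuclideanSpace ℝ (Fin d))))]
      refine lintegral_congr fun r => ?_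
      by_cases h : r • (ξ : EuclideanSpace ℝ (Fin d)) ∈ A <;>
        simp [Set.indicator, h, Set.mem_preimage]
    simp_rw [heq]
    refine Measurable.lintegral_kernel_prod_right (κ := Q)
      (f := fun ξ r => A.indicator (fun _ => (1 : ℝ≥0∞)) (r • (ξ : EuclideanSpace ℝ (Fin d)))) ?_
    have hsm : Measurable (fun z : Metric.sphere (0 : EuclideanSpace ℝ (Fin d)) 1 × ℝ =>
        z.2 • (z.1 : EuclideanSpace ℝ (Fin d))) := by fun_prop
    exact (measurable_const.indicator hA).comp hsm
  have hRmEq : Rm Set.univ = ∫⁻ ξ, I ξ ∂σ := by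
    rw [hRm, Measure.map_apply hmapm MeasurableSet.univ, Set.preimage_univ,
      MeasureTheory.withDensity_apply _ MeasurableSet.univ, Measure.restrict_univ, hQm,
      Measure.lintegral_bind hbindm.aemeasurable (by fun_prop)]
    refine lintegral_congr fun ξ => ?_
    rw [MeasureTheory.lintegral_map (by fun_prop) (by fun_prop)]
    rw [← MeasureTheory.lintegral_add_compl
      (fun r : ℝ => ENNReal.ofReal (‖r • (ξ : EuclideanSpace ℝ (Fin d))‖ ^ (α / p)))
      measurableSet_Ioi, Set.compl_Ioi,
      show ((Q ξ).restrict (Set.Iic 0)) = 0 from Measure.restrict_eq_zero.mpr (hQsupp ξ),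
      MeasureTheory.lintegral_zero_measure, add_zero]
    refine MeasureTheory.setLIntegral_congr_fun measurableSet_Ioi
      (fun r hr => ?_)
    have hr0 : (0 : ℝ) < r := hr
    have hnorm : ‖(ξ : EuclideanSpace ℝ (Fin d))‖ = 1 := mem_sphere_zero_iff_norm.mp ξ.2
    rw [norm_smul, hnorm, mul_one, Real.norm_eq_abs, abs_of_pos hr0]
  have hCCfin : ENNReal.ofReal CC < ⊤ := ENNReal.ofReal_lt_top
  constructor
  · rw [hKeq, hRmEq]
  · rw [hKeq, ← hRmEq] at *
    exact ENNReal.mul_lt_top (hRmEq ▸ hRfin) hCCfin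
end

section
/- Let q : (0,∞) → [0,1] be nonincreasing, and suppose there exist ε > 0, M ≥ 0, and p > α > 0 such that |q(u) - q(v)| ≤ M |u^p - v^p| for all u, v ∈ (0,ε). Then for any λ, t > 0, the integral ∫_0^∞ (q(u) - q(u e^{λt})) u^{-1-α} du is finite (the integrand is nonnegative since q is nonincreasing). -/
open MeasureTheory
open scoped ENNReal

/-- Finiteness of `K` for tempering functions of Class F: if `q : (0,∞) → [0,1]` is
nonincreasing and `|q(u) - q(v)| ≤ M|u^p - v^p|` on `(0,ε)` with `p > α > 0`, then
`∫_0^∞ (q(u) - q(ue^{λt})) u^{-1-α} du < ∞` for all `λ, t > 0`. -/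
theorem stmt_6 (q : ℝ → ℝ)
    (hq01 : ∀ u : ℝ, 0 < u → q u ∈ Set.Icc (0 : ℝ) 1)
    (hmono : ∀ u v : ℝ, 0 < u → u ≤ v → q v ≤ q u)
    (ε M p α : ℝ) (hε : 0 < ε) (hM : 0 ≤ M) (hα : 0 < α) (hαp : α < p)
    (hLip : ∀ u v : ℝ, u ∈ Set.Ioo 0 ε → v ∈ Set.Ioo 0 ε →
      |q u - q v| ≤ M * |u ^ p - v ^ p|)
    (lam t : ℝ) (hlam : 0 < lam) (ht : 0 < t) :
    ∫⁻ u in Set.Ioi (0 : ℝ),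
        ENNReal.ofReal ((q u - q (u * Real.exp (lam * t))) * u ^ (-1 - α)) < ⊤ := by
  set c := Real.exp (lam * t) with hc
  have hc1 : 1 < c := by
    rw [hc]
    exact Real.one_lt_exp_iff.mpr (by positivity)
  have hc0 : 0 < c := lt_trans one_pos hc1
  have hp0 : 0 < p := lt_trans hα hαp
  set δ := ε / (2 * c) with hδdef
  have hδ0 : 0 < δ := by positivity
  have hδε : δ < ε := by
    rw [hδdef, div_lt_iff₀ (by positivity)]
    nlinarith
  have hsplit : Set.Ioi (0:ℝ) = Set.Ioc 0 δ ∪ Set.Ioi δ :=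
    (Set.Ioc_union_Ioi_eq_Ioi hδ0.le).symm
  rw [hsplit, lintegral_union measurableSet_Ioi Set.Ioc_disjoint_Ioi_same]
  have hcp1 : (1:ℝ) ≤ c ^ p := Real.one_le_rpow hc1.le hp0.le
  have h1 : ∫⁻ u in Set.Ioc (0:ℝ) δ,
      ENNReal.ofReal ((q u - q (u * c)) * u ^ (-1 - α))
      ≤ ∫⁻ u in Set.Ioc (0:ℝ) δ, ENNReal.ofReal (M * c ^ p * u ^ (p - 1 - α)) := by
    refine setLIntegral_mono_ae' (by measurability) (Filter.Eventually.of_forall ?_)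
    intro u hu
    obtain ⟨hu0, huδ⟩ := hu
    apply ENNReal.ofReal_le_ofReal
    have huε : u ∈ Set.Ioo (0:ℝ) ε := ⟨hu0, lt_of_le_of_lt huδ hδε⟩
    have hucε : u * c ∈ Set.Ioo (0:ℝ) ε := by
      constructor
      · positivity
      · have : u * c ≤ δ * c := by nlinarith
        have h2 : δ * c = ε / 2 := by
          rw [hδdef]; field_simp
        nlinarith
    have hLb := hLip u (u * c) huε hucε
    have hmul : (u * c) ^ p = u ^ p * c ^ p := Real.mul_rpow hu0.le hc0.le
    have hup0 : 0 < u ^ p := Real.rpow_pos_of_pos hu0 p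
    have habs : |u ^ p - (u * c) ^ p| ≤ u ^ p * c ^ p := by
      rw [hmul, abs_sub_comm, abs_of_nonneg (by nlinarith)]
      nlinarith
    have hqle : q u - q (u * c) ≤ M * (u ^ p * c ^ p) := by
      calc q u - q (u * c) ≤ |q u - q (u * c)| := le_abs_self _
        _ ≤ M * |u ^ p - (u * c) ^ p| := hLb
        _ ≤ M * (u ^ p * c ^ p) := by nlinarith
    have hpow0 : (0:ℝ) ≤ u ^ (-1 - α) := (Real.rpow_pos_of_pos hu0 _).le
    calc (q u - q (u * c)) * u ^ (-1 - α)
        ≤ M * (u ^ p * c ^ p) * u ^ (-1 - α) := by nlinarith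
      _ = M * c ^ p * u ^ (p - 1 - α) := by
          rw [show p - 1 - α = p + (-1 - α) by ring, Real.rpow_add hu0]
          ring
  have h2 : ∫⁻ u in Set.Ioi δ,
      ENNReal.ofReal ((q u - q (u * c)) * u ^ (-1 - α))
      ≤ ∫⁻ u in Set.Ioi δ, ENNReal.ofReal (u ^ (-1 - α)) := by
    refine setLIntegral_mono_ae' (by measurability) (Filter.Eventually.of_forall ?_)
    intro u hu
    have hu0 : 0 < u := lt_trans hδ0 hu
    apply ENNReal.ofReal_le_ofReal
    have hpow0 : (0:ℝ) ≤ u ^ (-1 - α) := (Real.rpow_pos_of_pos hu0 _).le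
    have hq1 := hq01 u hu0
    have hq2 := hq01 (u * c) (by positivity)
    have : q u - q (u * c) ≤ 1 := by
      obtain ⟨h1, h2⟩ := hq1; obtain ⟨h3, h4⟩ := hq2; linarith
    nlinarith
  have hfin1 : ∫⁻ u in Set.Ioc (0:ℝ) δ,
      ENNReal.ofReal (M * c ^ p * u ^ (p - 1 - α)) < ⊤ := by
    apply IntegrableOn.setLIntegral_lt_top
    have : IntegrableOn (fun u : ℝ => u ^ (p - 1 - α)) (Set.Ioc 0 δ) volume := by
      rw [← intervalIntegrable_iff_integrableOn_Ioc_of_le hδ0.le]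
      exact intervalIntegral.intervalIntegrable_rpow' (by linarith)
    exact this.const_mul _
  have hfin2 : ∫⁻ u in Set.Ioi δ, ENNReal.ofReal (u ^ (-1 - α)) < ⊤ := by
    apply IntegrableOn.setLIntegral_lt_top
    exact integrableOn_Ioi_rpow_of_lt (by linarith) hδ0
  calc _ ≤ (∫⁻ u in Set.Ioc (0:ℝ) δ, ENNReal.ofReal (M * c ^ p * u ^ (p - 1 - α)))
          + ∫⁻ u in Set.Ioi δ, ENNReal.ofReal (u ^ (-1 - α)) := add_le_add h1 h2
    _ < ⊤ := ENNReal.add_lt_top.mpr ⟨hfin1, hfin2⟩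
end

section
/- Let Q be a Borel probability measure on (0,∞), let 0 < α < p, and let λ, t > 0. Then ∫_0^∞ ∫_{(0,∞)} (e^{-s u^p} - e^{-s u^p e^{pλt}}) Q(ds) u^{-1-α} du = α^{-1} Γ(1 - α/p)(e^{λtα} - 1) ∫_{(0,∞)} s^{α/p} Q(ds), as an equality in [0,∞]; in particular both sides are finite if and only if ∫_{(0,∞)} s^{α/p} Q(ds) < ∞. -/
open MeasureTheory
open scoped ENNReal

lemma aux_integrable {p q b : ℝ} (hp : 0 < p) (hq : -1 < q) (hb : 0 < b) :
    IntegrableOn (fun x : ℝ => x ^ q * Real.exp (-(b * x ^ p))) (Set.Ioi 0) := by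
  have hs : 0 < (q + 1) / p := div_pos (by linarith) hp
  have base := Real.GammaIntegral_convergent hs
  have hscaled : IntegrableOn (fun y : ℝ => Real.exp (-(b * y)) * (b * y) ^ ((q + 1) / p - 1))
      (Set.Ioi 0) := by
    have h := (integrableOn_Ioi_comp_mul_left_iff
      (fun x : ℝ => Real.exp (-x) * x ^ ((q + 1) / p - 1)) 0 hb).mpr (by simpa using base)
    simpa using h
  have h2 : IntegrableOn (fun y : ℝ => y ^ ((q + 1) / p - 1) * Real.exp (-(b * y)))
      (Set.Ioi 0) := by
    refine IntegrableOn.congr_fun (hscaled.const_mul (b ^ (-((q + 1) / p - 1))))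
      ?_ measurableSet_Ioi
    intro y hy
    have hy0 : 0 < y := hy
    show b ^ (-((q + 1) / p - 1)) * (Real.exp (-(b * y)) * (b * y) ^ ((q + 1) / p - 1))
        = y ^ ((q + 1) / p - 1) * Real.exp (-(b * y))
    rw [Real.mul_rpow hb.le hy0.le]
    have hbb : b ^ (-((q + 1) / p - 1)) * b ^ ((q + 1) / p - 1) = 1 := by
      rw [← Real.rpow_add hb]; simp
    linear_combination (Real.exp (-(b * y)) * y ^ ((q + 1) / p - 1)) * hbb
  have h4 := (integrableOn_Ioi_comp_rpow_iff'
    (fun y : ℝ => y ^ ((q + 1) / p - 1) * Real.exp (-(b * y))) hp.ne').mpr h2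
  refine h4.congr_fun ?_ measurableSet_Ioi
  intro x hx
  have hx0 : 0 < x := hx
  simp only [smul_eq_mul]
  rw [← Real.rpow_mul hx0.le, ← mul_assoc, ← Real.rpow_add hx0]
  have : p - 1 + p * ((q + 1) / p - 1) = q := by field_simp; ring
  rw [this]


lemma aux_gamma {p α : ℝ} (hp0 : 0 < p) (hα : 0 < α) (hαp : α < p) {w : ℝ} (hw : 0 < w) :
    ∫⁻ u in Set.Ioi (0 : ℝ), ENNReal.ofReal (u ^ (p - 1 - α) * Real.exp (-(w * u ^ p)))
      = ENNReal.ofReal (w ^ (α / p - 1) * ((1 / p) * Real.Gamma (1 - α / p))) := by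
  rw [← ofReal_integral_eq_lintegral_ofReal (aux_integrable hp0 (by linarith) hw)
    ((ae_restrict_iff' measurableSet_Ioi).mpr (ae_of_all _ fun x hx => by
      have hx0 : (0:ℝ) < x := hx; positivity))]
  congr 1
  have h := integral_rpow_mul_exp_neg_mul_rpow hp0 (q := p - 1 - α) (by linarith) hw
  simp_rw [neg_mul] at h ⊢
  rw [h]
  have e1 : (p - 1 - α + 1) / p = 1 - α / p := by field_simp; ring
  have e2 : -(p - 1 - α + 1) / p = α / p - 1 := by field_simp; ring
  rw [e1, e2]; ring


lemma aux_slice {v a b : ℝ} (hv : 0 < v) (hab : a < b) :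
    ENNReal.ofReal (Real.exp (-(a * v)) - Real.exp (-(b * v)))
      = ∫⁻ w in Set.Ioc a b, ENNReal.ofReal (v * Real.exp (-(w * v))) := by
  have hcont : Continuous fun w : ℝ => v * Real.exp (-(w * v)) := by continuity
  rw [← ofReal_integral_eq_lintegral_ofReal (hcont.integrableOn_Ioc)
    (ae_of_all _ fun w => by positivity)]
  congr 1
  rw [← intervalIntegral.integral_of_le hab.le]
  have hd : ∀ w ∈ Set.uIcc a b, HasDerivAt (fun w : ℝ => -Real.exp (-(w * v)))
      (v * Real.exp (-(w * v))) w := by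
    intro w _
    have h1 : HasDerivAt (fun w : ℝ => -(w * v)) (-v) w := by
      exact (((hasDerivAt_id w).mul_const v).neg).congr_deriv (by ring)
    have := h1.exp.neg
    exact this.congr_deriv (by ring)
  rw [intervalIntegral.integral_eq_sub_of_hasDerivAt hd (hcont.intervalIntegrable a b)]
  ring


lemma aux_inner {α p lam t : ℝ} (hα : 0 < α) (hαp : α < p) (hlam : 0 < lam) (ht : 0 < t)
    {s : ℝ} (hs : 0 < s) :
    ∫⁻ u in Set.Ioi (0 : ℝ),
        ENNReal.ofReal (Real.exp (-(s * u ^ p)) -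
          Real.exp (-(s * u ^ p * Real.exp (p * lam * t)))) * ENNReal.ofReal (u ^ (-1 - α))
      = ENNReal.ofReal (α⁻¹ * Real.Gamma (1 - α / p) * (Real.exp (lam * t * α) - 1)) *
          ENNReal.ofReal (s ^ (α / p)) := by
  have hp0 : 0 < p := lt_trans hα hαp
  set c : ℝ := Real.exp (p * lam * t) with hc
  have hc1 : 1 < c := Real.one_lt_exp_iff.2 (by positivity)
  have hsc : s < s * c := lt_mul_of_one_lt_right hs hc1
  have step1 : ∀ u ∈ Set.Ioi (0 : ℝ),
      ENNReal.ofReal (Real.exp (-(s * u ^ p)) - Real.exp (-(s * u ^ p * c))) *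
          ENNReal.ofReal (u ^ (-1 - α))
        = ∫⁻ w in Set.Ioc s (s * c),
            ENNReal.ofReal (u ^ (p - 1 - α) * Real.exp (-(w * u ^ p))) := by
    intro u hu
    have hu0 : 0 < u := hu
    have hup : 0 < u ^ p := Real.rpow_pos_of_pos hu0 p
    rw [show s * u ^ p * c = (s * c) * u ^ p from by ring, aux_slice hup hsc,
      ← lintegral_mul_const' (ENNReal.ofReal (u ^ (-1 - α))) _ ENNReal.ofReal_ne_top]
    refine lintegral_congr fun w => ?_
    rw [← ENNReal.ofReal_mul (by positivity)]
    congr 1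
    rw [show u ^ p * Real.exp (-(w * u ^ p)) * u ^ (-1 - α)
        = u ^ p * u ^ (-1 - α) * Real.exp (-(w * u ^ p)) from by ring,
      ← Real.rpow_add hu0, show p + (-1 - α) = p - 1 - α from by ring]
  rw [setLIntegral_congr_fun measurableSet_Ioi step1]
  have hmeas : AEMeasurable
      (Function.uncurry fun u w : ℝ => ENNReal.ofReal (u ^ (p - 1 - α) * Real.exp (-(w * u ^ p))))
      ((volume.restrict (Set.Ioi 0)).prod (volume.restrict (Set.Ioc s (s * c)))) := by
    apply Measurable.aemeasurable
    have m1 : Measurable fun z : ℝ × ℝ =>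
        ENNReal.ofReal (z.1 ^ (p - 1 - α) * Real.exp (-(z.2 * z.1 ^ p))) := by
      measurability
    exact m1
  rw [lintegral_lintegral_swap hmeas]
  rw [setLIntegral_congr_fun measurableSet_Ioc (fun w hw =>
    aux_gamma hp0 hα hαp (lt_trans hs hw.1))]
  set C : ℝ := (1 / p) * Real.Gamma (1 - α / p) with hC
  have hΓ : 0 < Real.Gamma (1 - α / p) :=
    Real.Gamma_pos_of_pos (by rw [sub_pos]; exact (div_lt_one hp0).2 hαp)
  have hC0 : 0 ≤ C := by positivity
  have hint : IntegrableOn (fun w : ℝ => w ^ (α / p - 1) * C) (Set.Ioc s (s * c)) := by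
    refine Integrable.mul_const ?_ C
    exact (intervalIntegrable_iff_integrableOn_Ioc_of_le hsc.le).1
      (intervalIntegral.intervalIntegrable_rpow' (by
        have : 0 < α / p := div_pos hα hp0
        linarith))
  rw [← ofReal_integral_eq_lintegral_ofReal hint
    ((ae_restrict_iff' measurableSet_Ioc).mpr (ae_of_all _ fun w hw => by
      have hw0 : 0 < w := lt_trans hs hw.1
      positivity))]
  have hK0 : 0 ≤ α⁻¹ * Real.Gamma (1 - α / p) * (Real.exp (lam * t * α) - 1) := by
    have h1 : (1:ℝ) ≤ Real.exp (lam * t * α) := Real.one_le_exp (by positivity)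
    exact mul_nonneg (mul_nonneg (inv_nonneg.2 hα.le) hΓ.le) (by linarith)
  rw [← ENNReal.ofReal_mul hK0]
  congr 1
  rw [← intervalIntegral.integral_of_le hsc.le, intervalIntegral.integral_mul_const,
    integral_rpow (Or.inl (by
      have : 0 < α / p := div_pos hα hp0
      linarith))]
  have e1 : α / p - 1 + 1 = α / p := by ring
  rw [e1, Real.mul_rpow hs.le (Real.exp_pos _).le, ← Real.exp_mul,
    show p * lam * t * (α / p) = lam * t * α from by field_simp]
  have hαp0 : α / p ≠ 0 := ne_of_gt (div_pos hα hp0)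
  rw [hC]
  field_simp

/-- The normalizing-constant computation of Proposition 3:
`∫_0^∞ ∫_{(0,∞)} (e^{-su^p} - e^{-su^p e^{pλt}}) Q(ds) u^{-1-α} du
  = α⁻¹ Γ(1-α/p)(e^{λtα} - 1) ∫_{(0,∞)} s^{α/p} Q(ds)` as an equality in `[0,∞]`. -/
theorem stmt_8 (Q : Measure ℝ) [IsProbabilityMeasure Q] (hQsupp : Q (Set.Iic 0) = 0)
    (α p lam t : ℝ) (hα : 0 < α) (hαp : α < p) (hlam : 0 < lam) (ht : 0 < t) :
    ∫⁻ u in Set.Ioi (0 : ℝ),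
        (∫⁻ s in Set.Ioi (0 : ℝ),
            ENNReal.ofReal (Real.exp (-(s * u ^ p)) -
              Real.exp (-(s * u ^ p * Real.exp (p * lam * t)))) ∂Q) *
          ENNReal.ofReal (u ^ (-1 - α))
      = ENNReal.ofReal (α⁻¹ * Real.Gamma (1 - α / p) * (Real.exp (lam * t * α) - 1)) *
          ∫⁻ s in Set.Ioi (0 : ℝ), ENNReal.ofReal (s ^ (α / p)) ∂Q := by
  have step1 : ∫⁻ u in Set.Ioi (0 : ℝ),
      (∫⁻ s in Set.Ioi (0 : ℝ),
          ENNReal.ofReal (Real.exp (-(s * u ^ p)) -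
            Real.exp (-(s * u ^ p * Real.exp (p * lam * t)))) ∂Q) *
        ENNReal.ofReal (u ^ (-1 - α))
      = ∫⁻ u in Set.Ioi (0 : ℝ), ∫⁻ s in Set.Ioi (0 : ℝ),
          ENNReal.ofReal (Real.exp (-(s * u ^ p)) -
            Real.exp (-(s * u ^ p * Real.exp (p * lam * t)))) *
            ENNReal.ofReal (u ^ (-1 - α)) ∂Q := by
    refine lintegral_congr fun u => ?_
    exact (lintegral_mul_const' (ENNReal.ofReal (u ^ (-1 - α))) _ ENNReal.ofReal_ne_top).symm
  rw [step1]
  have hmeas : AEMeasurable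
      (Function.uncurry fun u s : ℝ =>
        ENNReal.ofReal (Real.exp (-(s * u ^ p)) -
          Real.exp (-(s * u ^ p * Real.exp (p * lam * t)))) * ENNReal.ofReal (u ^ (-1 - α)))
      ((volume.restrict (Set.Ioi 0)).prod (Q.restrict (Set.Ioi 0))) := by
    apply Measurable.aemeasurable
    have mrp : Measurable fun x : ℝ => x ^ p := by measurability
    have mrg : Measurable fun x : ℝ => x ^ (-1 - α) := by measurability
    have ma : Measurable fun z : ℝ × ℝ => z.2 * z.1 ^ p :=
      measurable_snd.mul (mrp.comp measurable_fst)
    have me1 : Measurable fun z : ℝ × ℝ => Real.exp (-(z.2 * z.1 ^ p)) :=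
      Real.measurable_exp.comp ma.neg
    have me2 : Measurable fun z : ℝ × ℝ =>
        Real.exp (-(z.2 * z.1 ^ p * Real.exp (p * lam * t))) :=
      Real.measurable_exp.comp ((ma.mul_const _).neg)
    exact (ENNReal.measurable_ofReal.comp (me1.sub me2)).mul
      (ENNReal.measurable_ofReal.comp (mrg.comp measurable_fst))
  rw [lintegral_lintegral_swap hmeas]
  rw [setLIntegral_congr_fun measurableSet_Ioi (fun s hs =>
    aux_inner hα hαp hlam ht hs)]
  exact lintegral_const_mul' _ _ ENNReal.ofReal_ne_top
end

section
/- Let Q be a Borel probability measure on (0,∞), let ζ > 0 satisfy Q((0,ζ)) = 0, let 0 < α < p and λ, t > 0, and suppose m₁ = ∫_{(0,∞)} s Q(ds) < ∞ and m = ∫_{(0,∞)} s^{α/p} Q(ds) ∈ (0,∞). Set κ = α / (Γ(1 - α/p)(e^{λtα} - 1) m), define f(u) = κ ∫_{(0,∞)} (e^{-s u^p} - e^{-s u^p e^{pλt}}) Q(ds) · u^{-1-α} for u > 0, let g₂ be the GGa(p-α, p, ζ) pdf, and set V₂ = ζ^{α/p - 1} · α (e^{tλp} - 1) m₁ / (p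 (e^{tλα} - 1) m). Then f(u) ≤ V₂ g₂(u) for all u > 0. -/
open MeasureTheory

/-- Proposition 4: when `Q((0,ζ)) = 0` with `ζ > 0`, the density `f` is dominated by
`V₂ g₂`, where `g₂` is the pdf of the generalized gamma distribution `GGa(p-α, p, ζ)`. -/
theorem stmt_9 (Q : Measure ℝ) [IsProbabilityMeasure Q] (hQsupp : Q (Set.Iic 0) = 0)
    (ζ : ℝ) (hζ : 0 < ζ) (hQζ : Q (Set.Ioo 0 ζ) = 0)
    (α p lam t : ℝ) (hα : 0 < α) (hαp : α < p) (hlam : 0 < lam) (ht : 0 < t)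
    (hint₁ : IntegrableOn (fun s : ℝ => s) (Set.Ioi 0) Q)
    (hint : IntegrableOn (fun s : ℝ => s ^ (α / p)) (Set.Ioi 0) Q)
    (m₁ m : ℝ)
    (hm₁ : m₁ = ∫ s in Set.Ioi (0 : ℝ), s ∂Q)
    (hm : m = ∫ s in Set.Ioi (0 : ℝ), s ^ (α / p) ∂Q) (hmpos : 0 < m)
    (κ : ℝ)
    (hκ : κ = α / (Real.Gamma (1 - α / p) * (Real.exp (lam * t * α) - 1) * m))
    (f g₂ : ℝ → ℝ)
    (hf : ∀ u, f u = κ * (∫ s in Set.Ioi (0 : ℝ),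
        (Real.exp (-(s * u ^ p)) - Real.exp (-(s * u ^ p * Real.exp (p * lam * t)))) ∂Q) *
        u ^ (-1 - α))
    (hg₂ : ∀ u, g₂ u = p * ζ ^ ((p - α) / p) / Real.Gamma ((p - α) / p) *
        u ^ (p - α - 1) * Real.exp (-(ζ * u ^ p)))
    (V₂ : ℝ)
    (hV₂ : V₂ = ζ ^ (α / p - 1) *
        (α * (Real.exp (t * lam * p) - 1) * m₁) / (p * (Real.exp (t * lam * α) - 1) * m)) :
    ∀ u : ℝ, 0 < u → f u ≤ V₂ * g₂ u := by
  intro u hu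
  have hp : 0 < p := hα.trans hαp
  set E := Real.exp (p * lam * t) with hE
  have hE1 : 1 < E := by
    rw [hE, show (1:ℝ) = Real.exp 0 by simp]
    exact Real.exp_lt_exp.mpr (by positivity)
  have hup : 0 < u ^ p := Real.rpow_pos_of_pos hu p
  -- a.e. s ≥ ζ
  have hae : ∀ᵐ s ∂(Q.restrict (Set.Ioi 0)), ζ ≤ s := by
    rw [ae_restrict_iff' measurableSet_Ioi]
    rw [ae_iff]
    apply measure_mono_null _ hQζ
    intro s hs
    simp only [Set.mem_setOf_eq, not_forall, Set.mem_Ioi] at hs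
    exact ⟨hs.1, lt_of_not_ge hs.2⟩
  -- pointwise bound
  have key : ∀ s : ℝ, ζ ≤ s →
      Real.exp (-(s * u ^ p)) - Real.exp (-(s * u ^ p * E)) ≤
        (E - 1) * Real.exp (-(ζ * u ^ p)) * u ^ p * s := by
    intro s hs
    have hs0 : 0 < s := lt_of_lt_of_le hζ hs
    have hx : ζ * u ^ p ≤ s * u ^ p := mul_le_mul_of_nonneg_right hs hup.le
    have h1 : Real.exp (-(s * u ^ p)) ≤ Real.exp (-(ζ * u ^ p)) :=
      Real.exp_le_exp.mpr (by linarith)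
    have h2 : Real.exp (-(s * u ^ p)) - Real.exp (-(s * u ^ p * E)) =
        Real.exp (-(s * u ^ p)) * (1 - Real.exp (-(s * u ^ p * (E - 1)))) := by
      rw [mul_sub, mul_one, ← Real.exp_add]; ring_nf
    have hy : 0 ≤ s * u ^ p * (E - 1) := mul_nonneg (by positivity) (by linarith)
    have h3 : 1 - Real.exp (-(s * u ^ p * (E - 1))) ≤ s * u ^ p * (E - 1) := by
      have := Real.add_one_le_exp (-(s * u ^ p * (E - 1))); linarith
    have h4 : 0 ≤ 1 - Real.exp (-(s * u ^ p * (E - 1))) := by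
      have : Real.exp (-(s * u ^ p * (E - 1))) ≤ 1 := Real.exp_le_one_iff.mpr (by linarith)
      linarith
    calc Real.exp (-(s * u ^ p)) - Real.exp (-(s * u ^ p * E))
        = Real.exp (-(s * u ^ p)) * (1 - Real.exp (-(s * u ^ p * (E - 1)))) := h2
      _ ≤ Real.exp (-(ζ * u ^ p)) * (s * u ^ p * (E - 1)) := by
          apply mul_le_mul h1 h3 h4 (Real.exp_pos _).le
      _ = (E - 1) * Real.exp (-(ζ * u ^ p)) * u ^ p * s := by ring
  -- integral bound
  have hIB : (∫ s in Set.Ioi (0 : ℝ),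
      (Real.exp (-(s * u ^ p)) - Real.exp (-(s * u ^ p * E))) ∂Q) ≤
      (E - 1) * Real.exp (-(ζ * u ^ p)) * u ^ p * m₁ := by
    rw [hm₁, ← integral_const_mul]
    apply integral_mono_of_nonneg
    · filter_upwards [hae] with s hs
      have : -(s * u ^ p * E) ≤ -(s * u ^ p) := by
        nlinarith [mul_nonneg (mul_nonneg (hζ.trans_le hs).le hup.le) (by linarith : (0:ℝ) ≤ E - 1)]
      simpa using sub_nonneg.mpr (Real.exp_le_exp.mpr this)
    · exact (hint₁.const_mul _)
    · filter_upwards [hae] with s hs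
      exact key s hs
  -- positivity facts
  have hαp1 : 0 < 1 - α / p := by
    have : α / p < 1 := (div_lt_one hp).mpr hαp
    linarith
  have hΓ : 0 < Real.Gamma (1 - α / p) := Real.Gamma_pos_of_pos hαp1
  have hexpα : 0 < Real.exp (lam * t * α) - 1 := by
    have : 1 < Real.exp (lam * t * α) := by
      rw [show (1:ℝ) = Real.exp 0 by simp]
      exact Real.exp_lt_exp.mpr (by positivity)
    linarith
  have hκpos : 0 < κ := by rw [hκ]; positivity
  have hunegpos : 0 < u ^ (-1 - α) := Real.rpow_pos_of_pos hu _
  -- main chain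
  rw [hf u]
  have step : κ * (∫ s in Set.Ioi (0 : ℝ),
      (Real.exp (-(s * u ^ p)) - Real.exp (-(s * u ^ p * E))) ∂Q) * u ^ (-1 - α) ≤
      κ * ((E - 1) * Real.exp (-(ζ * u ^ p)) * u ^ p * m₁) * u ^ (-1 - α) := by
    gcongr
  refine le_trans step (le_of_eq ?_)
  -- algebraic identity
  rw [hV₂, hg₂ u, hκ]
  have hΓeq : Real.Gamma ((p - α) / p) = Real.Gamma (1 - α / p) := by
    congr 1; field_simp
  have hζeq : ζ ^ (α / p - 1) * ζ ^ ((p - α) / p) = 1 := by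
    rw [← Real.rpow_add hζ, show α / p - 1 + (p - α) / p = 0 by field_simp; ring, Real.rpow_zero]
  have hueq : u ^ (p - α - 1) = u ^ p * u ^ (-1 - α) := by
    rw [← Real.rpow_add hu]; ring_nf
  have hexpeq1 : Real.exp (t * lam * p) = E := by rw [hE]; ring_nf
  have hexpeq2 : Real.exp (t * lam * α) = Real.exp (lam * t * α) := by ring_nf
  have hZ1 : ζ ^ (α / p - 1) = (ζ ^ ((p - α) / p))⁻¹ := eq_inv_of_mul_eq_one_left hζeq
  have hZ2 : (0:ℝ) < ζ ^ ((p - α) / p) := Real.rpow_pos_of_pos hζ _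
  rw [hΓeq, hueq, hexpeq1, hexpeq2, hZ1]
  set G := Real.Gamma (1 - α / p) with hG
  set Z := ζ ^ ((p - α) / p) with hZ
  set A := Real.exp (lam * t * α) with hA
  set X := Real.exp (-(ζ * u ^ p)) with hX
  set U1 := u ^ p with hU1
  set U2 := u ^ (-1 - α) with hU2
  have hAne : A - 1 ≠ 0 := hexpα.ne'
  field_simp
end
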